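/- Let m > 0, let n be a positive integer, let a_k ≥ b_k ≥ 36π m² be real numbers for k = 1, …, n, and let γ ≥ 0 be a constant. Then φ_m(γ + Σ_{k=1}^n a_k) − Σ_{k=1}^n φ_m(a_k) ≥ φ_m(γ + Σ_{k=1}^n b_k) − Σ_{k=1}^n φ_m(b_k). -/

import Mathlib

/-- Area of the coordinate sphere of radius `r` in the Schwarzschild manifold of
mass `m`, in isotropic coordinates: `A_m(r) = 4π r² (1 + m/(2r))⁴`. -/
noncomputable def schwA (m r : ℝ) : ℝ := 4 * Real.pi * r ^ 2 * (1 + m / (2 * r)) ^ 4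

/-- Volume enclosed between the horizon `r = m/2` and the coordinate sphere of radius `r`
in the Schwarzschild manifold of mass `m`:
`V_m(r) = ∫_{m/2}^r 4π ρ² (1 + m/(2ρ))⁶ dρ`. -/
noncomputable def schwV (m r : ℝ) : ℝ :=
  ∫ ρ in (m / 2)..r, 4 * Real.pi * ρ ^ 2 * (1 + m / (2 * ρ)) ^ 6

/-- The Schwarzschild isoperimetric profile of mass `m`: `φ_m = V_m ∘ A_m⁻¹`, where
`A_m⁻¹ : [16πm², ∞) → [m/2, ∞)` is the inverse of the (bijective, strictly increasing)
area function `A_m : [m/2, ∞) → [16πm², ∞)`. -/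
noncomputable def schwPhi (m A : ℝ) : ℝ :=
  schwV m (Function.invFunOn (schwA m) (Set.Ici (m / 2)) A)

open Real Set

noncomputable def uu (A : ℝ) : ℝ := Real.sqrt (A / (4 * Real.pi))

noncomputable def rr (m A : ℝ) : ℝ :=
  (uu A - m + Real.sqrt ((uu A) ^ 2 - 2 * m * uu A)) / 2


lemma uu_sq {A : ℝ} (hA : 0 ≤ A) : (uu A) ^ 2 = A / (4 * Real.pi) := by
  rw [uu, sq_sqrt (by positivity)]

lemma uu_nonneg (A : ℝ) : 0 ≤ uu A := Real.sqrt_nonneg _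

lemma uu_ge {m A : ℝ} (hm : 0 ≤ m) (hA : 16 * Real.pi * m ^ 2 ≤ A) : 2 * m ≤ uu A := by
  have hpi := Real.pi_pos
  have h1 : (2 * m) ^ 2 ≤ (uu A) ^ 2 := by
    rw [uu_sq (le_trans (by positivity) hA)]
    rw [le_div_iff₀ (by positivity)]
    nlinarith
  nlinarith [uu_nonneg A]

lemma rr_ge {m A : ℝ} (hm : 0 < m) (hA : 16 * Real.pi * m ^ 2 ≤ A) : m / 2 ≤ rr m A := by
  have h1 := uu_ge hm.le hA
  have h2 : 0 ≤ Real.sqrt ((uu A) ^ 2 - 2 * m * uu A) := Real.sqrt_nonneg _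
  rw [rr]; linarith

lemma rr_gt {m A : ℝ} (hm : 0 < m) (hA : 16 * Real.pi * m ^ 2 < A) : m / 2 < rr m A := by
  have h1 : 2 * m < uu A := by
    have hpi := Real.pi_pos
    have h1 : (2 * m) ^ 2 < (uu A) ^ 2 := by
      rw [uu_sq (le_trans (by positivity) hA.le)]
      rw [lt_div_iff₀ (by positivity)]
      nlinarith
    nlinarith [uu_nonneg A, hm]
  have h2 : 0 ≤ Real.sqrt ((uu A) ^ 2 - 2 * m * uu A) := Real.sqrt_nonneg _
  rw [rr]; linarith

/-- key quadratic identity `(2 rr + m)^2 = 4 (uu A) (rr m A)`. -/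
lemma rr_quad {m A : ℝ} (hm : 0 < m) (hA : 16 * Real.pi * m ^ 2 ≤ A) :
    (2 * rr m A + m) ^ 2 = 4 * uu A * rr m A := by
  have h1 := uu_ge hm.le hA
  have hs : (Real.sqrt ((uu A) ^ 2 - 2 * m * uu A)) ^ 2 = (uu A) ^ 2 - 2 * m * uu A := by
    rw [sq_sqrt]; nlinarith
  rw [rr]
  nlinarith [hs]

lemma schwA_rr {m A : ℝ} (hm : 0 < m) (hA : 16 * Real.pi * m ^ 2 ≤ A) :
    schwA m (rr m A) = A := by
  have hpi := Real.pi_pos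
  have hr : m / 2 < rr m A + 1 := by linarith [rr_ge hm hA]
  have hr0 : 0 < rr m A := lt_of_lt_of_le (by linarith) (rr_ge hm hA)
  have hq := rr_quad hm hA
  have hu : (uu A) ^ 2 = A / (4 * Real.pi) := uu_sq (le_trans (by positivity) hA)
  rw [schwA]
  have h1 : 1 + m / (2 * rr m A) = (2 * rr m A + m) / (2 * rr m A) := by
    field_simp
  rw [h1, div_pow]
  have h2 : (2 * rr m A + m) ^ 4 = 16 * (uu A) ^ 2 * (rr m A) ^ 2 := by nlinarith [hq]
  rw [h2, hu]
  field_simp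
  ring

lemma schwA_eq {m r : ℝ} (hr : 0 < r) :
    schwA m r = 4 * Real.pi * (r + m + m ^ 2 / (4 * r)) ^ 2 := by
  rw [schwA]; field_simp; ring

lemma schwA_strictMonoOn {m : ℝ} (hm : 0 < m) : StrictMonoOn (schwA m) (Ici (m / 2)) := by
  intro r1 h1 r2 h2 h12
  simp only [mem_Ici] at h1 h2
  have hr1 : 0 < r1 := by linarith
  have hr2 : 0 < r2 := by linarith
  rw [schwA_eq hr1, schwA_eq hr2]
  have hpi := Real.pi_pos
  have hp1 : 0 < r1 + m + m ^ 2 / (4 * r1) := by positivity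
  have key : r1 + m + m ^ 2 / (4 * r1) < r2 + m + m ^ 2 / (4 * r2) := by
    have e : m ^ 2 / (4 * r1) - m ^ 2 / (4 * r2) = m ^ 2 * (r2 - r1) / (4 * r1 * r2) := by
      field_simp
    have lt : m ^ 2 * (r2 - r1) / (4 * r1 * r2) < r2 - r1 := by
      rw [div_lt_iff₀ (by positivity)]
      have hm2 : m ^ 2 < 4 * r1 * r2 := by nlinarith
      nlinarith [mul_pos (sub_pos.2 h12) (sub_pos.2 hm2)]
    linarith [e, lt]
  have hsq : (r1 + m + m ^ 2 / (4 * r1)) ^ 2 < (r2 + m + m ^ 2 / (4 * r2)) ^ 2 := by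
    nlinarith [key, hp1]
  nlinarith [hsq, hpi]

lemma schwPhi_eq {m A : ℝ} (hm : 0 < m) (hA : 16 * Real.pi * m ^ 2 ≤ A) :
    schwPhi m A = schwV m (rr m A) := by
  rw [schwPhi]
  congr 1
  have hmem : rr m A ∈ Ici (m / 2) := rr_ge hm hA
  have hex : ∃ x ∈ Ici (m / 2), schwA m x = A := ⟨rr m A, hmem, schwA_rr hm hA⟩
  exact (schwA_strictMonoOn hm).injOn (Function.invFunOn_mem hex) hmem
    ((Function.invFunOn_eq hex).trans (schwA_rr hm hA).symm)

lemma rr_mono {m : ℝ} (hm : 0 < m) {A1 A2 : ℝ} (h1 : 16 * Real.pi * m ^ 2 ≤ A1)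
    (h12 : A1 ≤ A2) : rr m A1 ≤ rr m A2 := by
  by_contra h
  push_neg at h
  have := schwA_strictMonoOn hm (rr_ge hm (h1.trans h12)) (rr_ge hm h1) h
  rw [schwA_rr hm (h1.trans h12), schwA_rr hm h1] at this
  linarith

lemma rr_ge_r0 {m A : ℝ} (hm : 0 < m) (hA : 36 * Real.pi * m ^ 2 ≤ A) :
    m * (2 + Real.sqrt 3) / 2 ≤ rr m A := by
  have hpi := Real.pi_pos
  have h9 : 3 * m ≤ uu A := by
    have h1 : (3 * m) ^ 2 ≤ (uu A) ^ 2 := by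
      rw [uu_sq (le_trans (by positivity) hA), le_div_iff₀ (by positivity)]
      nlinarith
    nlinarith [uu_nonneg A]
  have hs : m * Real.sqrt 3 ≤ Real.sqrt ((uu A) ^ 2 - 2 * m * uu A) := by
    have h1 : m ^ 2 * 3 ≤ (uu A) ^ 2 - 2 * m * uu A := by nlinarith
    calc m * Real.sqrt 3 = Real.sqrt (m ^ 2 * 3) := by
          rw [Real.sqrt_mul (sq_nonneg m), Real.sqrt_sq hm.le]
      _ ≤ _ := Real.sqrt_le_sqrt h1
  rw [rr]; linarith

lemma continuousOn_integrand (m : ℝ) :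
    ContinuousOn (fun ρ : ℝ => 4 * Real.pi * ρ ^ 2 * (1 + m / (2 * ρ)) ^ 6) (Ioi 0) := by
  intro x hx
  have hx0 : (2 * x : ℝ) ≠ 0 := by simp only [mem_Ioi] at hx; positivity
  exact ContinuousAt.continuousWithinAt <|
    (continuousAt_const.mul (continuousAt_id.pow 2)).mul
      ((continuousAt_const.add (continuousAt_const.div
        (continuousAt_const.mul continuousAt_id) hx0)).pow 6)

lemma hasDerivAt_schwV {m r : ℝ} (hm : 0 < m) (hr : m / 2 < r) :
    HasDerivAt (schwV m) (4 * Real.pi * r ^ 2 * (1 + m / (2 * r)) ^ 6) r := by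
  have hr0 : 0 < r := by linarith
  have hsub : uIcc (m / 2) r ⊆ Ioi 0 := by
    rw [uIcc_of_le (by linarith)]
    intro x hx
    exact lt_of_lt_of_le (by linarith) hx.1
  exact intervalIntegral.integral_hasDerivAt_right
    (((continuousOn_integrand m).mono hsub).intervalIntegrable)
    ((continuousOn_integrand m).stronglyMeasurableAtFilter isOpen_Ioi r hr0)
    ((continuousOn_integrand m).continuousAt (isOpen_Ioi.mem_nhds hr0))

lemma hasDerivAt_g {m A : ℝ} (hm : 0 < m) (hA : 16 * Real.pi * m ^ 2 < A) :
    HasDerivAt (fun A => schwV m (rr m A))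
      ((2 * rr m A + m) ^ 3 / (8 * rr m A * (2 * rr m A - m))) A := by
  have hpi := Real.pi_pos
  have hApos : 0 < A := lt_trans (by positivity) hA
  have hu2 : (uu A) ^ 2 = A / (4 * Real.pi) := uu_sq hApos.le
  have hu0 : 0 < uu A := by
    rw [uu]; exact Real.sqrt_pos.2 (by positivity)
  have hum : 2 * m < uu A := by
    have h1 : (2 * m) ^ 2 < (uu A) ^ 2 := by
      rw [hu2, lt_div_iff₀ (by positivity)]; nlinarith
    nlinarith
  have hinner : 0 < (uu A) ^ 2 - 2 * m * uu A := by nlinarith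
  set s := Real.sqrt ((uu A) ^ 2 - 2 * m * uu A) with hs_def
  have hs0 : 0 < s := Real.sqrt_pos.2 hinner
  have hs2 : s ^ 2 = (uu A) ^ 2 - 2 * m * uu A := Real.sq_sqrt hinner.le
  have hr : m / 2 < rr m A := rr_gt hm hA
  have hr0 : 0 < rr m A := by linarith
  have hrs : 2 * rr m A = uu A - m + s := by rw [rr]; ring
  have hq : (2 * rr m A + m) ^ 2 = 4 * uu A * rr m A := rr_quad hm hA.le
  -- derivative of uu
  have du : HasDerivAt uu (1 / (2 * uu A) * (1 / (4 * Real.pi))) A := by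
    have h1 : HasDerivAt (fun A : ℝ => A / (4 * Real.pi)) (1 / (4 * Real.pi)) A :=
      (hasDerivAt_id A).div_const (4 * Real.pi)
    have h2 := (Real.hasDerivAt_sqrt (x := A / (4 * Real.pi)) (by positivity)).comp A h1
    have huu : uu = fun A : ℝ => Real.sqrt (A / (4 * Real.pi)) := rfl
    rw [huu]
    exact h2
  -- derivative of s as a function of A
  have dinner : HasDerivAt (fun A => (uu A) ^ 2 - 2 * m * uu A)
      (2 * uu A ^ 1 * (1 / (2 * uu A) * (1 / (4 * Real.pi)))
        - 2 * m * (1 / (2 * uu A) * (1 / (4 * Real.pi)))) A := by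
    have h1 := du.fun_pow 2
    have h2 := du.const_mul (2 * m)
    simpa using h1.fun_sub h2
  have ds : HasDerivAt (fun A => Real.sqrt ((uu A) ^ 2 - 2 * m * uu A))
      (1 / (2 * s) * (2 * uu A ^ 1 * (1 / (2 * uu A) * (1 / (4 * Real.pi)))
        - 2 * m * (1 / (2 * uu A) * (1 / (4 * Real.pi))))) A := by
    have h2 := (Real.hasDerivAt_sqrt (x := (uu A) ^ 2 - 2 * m * uu A) hinner.ne').comp A dinner
    exact h2
  -- derivative of rr
  have dr : HasDerivAt (rr m)
      ((1 / (2 * uu A) * (1 / (4 * Real.pi))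
        + 1 / (2 * s) * (2 * uu A ^ 1 * (1 / (2 * uu A) * (1 / (4 * Real.pi)))
          - 2 * m * (1 / (2 * uu A) * (1 / (4 * Real.pi))))) / 2) A := by
    have : rr m = fun A => (uu A - m + Real.sqrt ((uu A) ^ 2 - 2 * m * uu A)) / 2 := rfl
    rw [this]
    exact ((du.sub_const m).add ds).div_const 2
  have dV := hasDerivAt_schwV hm hr
  have dcomp := dV.comp A dr
  refine HasDerivAt.congr_deriv dcomp (Eq.symm ?_)
  have h1 : 1 + m / (2 * rr m A) = (2 * rr m A + m) / (2 * rr m A) := by field_simp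
  rw [h1]
  have key : (2 * rr m A + m) ^ 3 * (2 * rr m A - m) = 16 * (rr m A) ^ 2 * uu A * s := by
    have hsub : s = 2 * rr m A + m - uu A := by linarith
    rw [hsub]
    linear_combination ((2 * rr m A + m) * (2 * rr m A - m) - 4 * rr m A * uu A) * hq
  have hne1 : 2 * rr m A - m ≠ 0 := by linarith
  rw [div_pow]
  field_simp
  linear_combination (-(16 * rr m A)) * key
    + (8 * (2 * rr m A + m) ^ 3 * (2 * rr m A - m)) * hrs

/-- The derivative profile `F m r = (2r+m)³ / (8r(2r−m))`. -/
noncomputable def FF (m r : ℝ) : ℝ := (2 * r + m) ^ 3 / (8 * r * (2 * r - m))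

lemma hasDerivAt_FF {m r : ℝ} (hm : 0 < m) (hr : m / 2 < r) :
    HasDerivAt (FF m)
      ((3 * (2 * r + m) ^ 2 * 2 * (8 * r * (2 * r - m))
        - (2 * r + m) ^ 3 * (8 * (2 * r - m) + 8 * r * 2)) / (8 * r * (2 * r - m)) ^ 2) r := by
  have hr0 : 0 < r := by linarith
  have hd : 8 * r * (2 * r - m) ≠ 0 := by
    have : 0 < 2 * r - m := by linarith
    positivity
  have hN : HasDerivAt (fun r : ℝ => (2 * r + m) ^ 3) (3 * (2 * r + m) ^ 2 * 2) r := by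
    have h1 : HasDerivAt (fun r : ℝ => 2 * r + m) 2 r := by
      simpa using ((hasDerivAt_id r).const_mul 2).add_const m
    simpa using h1.fun_pow 3
  have hD : HasDerivAt (fun r : ℝ => 8 * r * (2 * r - m)) (8 * (2 * r - m) + 8 * r * 2) r := by
    have h1 : HasDerivAt (fun r : ℝ => 8 * r) 8 r := by
      simpa using (hasDerivAt_id r).const_mul 8
    have h2 : HasDerivAt (fun r : ℝ => 2 * r - m) 2 r := by
      simpa using ((hasDerivAt_id r).const_mul 2).sub_const m
    simpa using h1.fun_mul h2
  exact hN.div hD hd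

lemma FF_monotoneOn {m : ℝ} (hm : 0 < m) :
    MonotoneOn (FF m) (Ici (m * (2 + Real.sqrt 3) / 2)) := by
  have ht : (Real.sqrt 3) ^ 2 = 3 := Real.sq_sqrt (by norm_num)
  have ht0 : 0 < Real.sqrt 3 := Real.sqrt_pos.2 (by norm_num)
  have hr0m : m / 2 < m * (2 + Real.sqrt 3) / 2 := by nlinarith
  apply monotoneOn_of_deriv_nonneg (convex_Ici _)
  · intro r hr
    simp only [mem_Ici] at hr
    exact (hasDerivAt_FF hm (lt_of_lt_of_le hr0m hr)).continuousAt.continuousWithinAt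
  · intro r hr
    rw [interior_Ici] at hr
    simp only [mem_Ioi] at hr
    exact (hasDerivAt_FF hm (by linarith)).differentiableAt.differentiableWithinAt
  · intro r hr
    rw [interior_Ici] at hr
    simp only [mem_Ioi] at hr
    have hrm : m / 2 < r := by linarith
    rw [(hasDerivAt_FF hm hrm).deriv]
    apply div_nonneg _ (sq_nonneg _)
    have hbr : 0 ≤ 4 * r ^ 2 - 8 * m * r + m ^ 2 := by
      have h1 : m * Real.sqrt 3 ≤ 2 * r - 2 * m := by nlinarith
      have h2 : (m * Real.sqrt 3) ^ 2 ≤ (2 * r - 2 * m) ^ 2 := by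
        nlinarith [mul_nonneg hm.le ht0.le]
      nlinarith [h2, ht]
    nlinarith [hbr, sq_nonneg (2 * r + m), hrm]
  
lemma deriv_g_eq {m A : ℝ} (hm : 0 < m) (hA : 16 * Real.pi * m ^ 2 < A) :
    deriv (fun A => schwV m (rr m A)) A = FF m (rr m A) := by
  rw [(hasDerivAt_g hm hA).deriv, FF]

/-- The profile function as explicit composition. -/
noncomputable def gg (m A : ℝ) : ℝ := schwV m (rr m A)

lemma convexOn_g {m : ℝ} (hm : 0 < m) :
    ConvexOn ℝ (Ici (36 * Real.pi * m ^ 2)) (gg m) := by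
  have hgg : gg m = fun A => schwV m (rr m A) := rfl
  rw [hgg]
  have hpi := Real.pi_pos
  have h16 : ∀ A : ℝ, 36 * Real.pi * m ^ 2 ≤ A → 16 * Real.pi * m ^ 2 < A := by
    intro A hA; nlinarith [mul_pos hpi (pow_pos hm 2)]
  apply MonotoneOn.convexOn_of_deriv (convex_Ici _)
  · intro A hA
    exact (hasDerivAt_g hm (h16 A hA)).continuousAt.continuousWithinAt
  · intro A hA
    rw [interior_Ici] at hA
    exact (hasDerivAt_g hm (h16 A hA.le)).differentiableAt.differentiableWithinAt
  · intro A1 h1 A2 h2 h12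
    rw [interior_Ici] at h1 h2
    simp only [mem_Ioi] at h1 h2
    rw [deriv_g_eq hm (h16 A1 h1.le), deriv_g_eq hm (h16 A2 h2.le)]
    exact FF_monotoneOn hm (rr_ge_r0 hm h1.le) (rr_ge_r0 hm h2.le)
      (rr_mono hm (le_of_lt (h16 A1 h1.le)) h12)

lemma convex_two_point {c : ℝ} {g : ℝ → ℝ} (hg : ConvexOn ℝ (Ici c) g)
    {x y t : ℝ} (hx : c ≤ x) (hxy : x ≤ y) (ht : 0 ≤ t) :
    g (x + t) - g x ≤ g (y + t) - g y := by
  rcases eq_or_lt_of_le (show x ≤ y + t by linarith) with heq | hlt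
  · have hy : y = x := le_antisymm (by linarith) hxy
    have ht0 : t = 0 := by rw [hy] at heq; linarith
    rw [hy, ht0]
  · have hd0 : (0:ℝ) < y + t - x := by linarith
    have hα : 0 ≤ (y - x) / (y + t - x) := div_nonneg (by linarith) hd0.le
    have hβ : 0 ≤ t / (y + t - x) := div_nonneg ht hd0.le
    have hαβ : (y - x) / (y + t - x) + t / (y + t - x) = 1 := by
      field_simp
      ring
    have hx' : x ∈ Ici c := hx
    have hyt' : y + t ∈ Ici c := by simp only [mem_Ici]; linarith
    have h1 := hg.2 hx' hyt' hα hβ hαβ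
    have h2 := hg.2 hx' hyt' hβ hα (by linarith)
    rw [smul_eq_mul, smul_eq_mul, smul_eq_mul, smul_eq_mul] at h1 h2
    have e1 : (y - x) / (y + t - x) * x + t / (y + t - x) * (y + t) = x + t := by
      field_simp; ring
    have e2 : t / (y + t - x) * x + (y - x) / (y + t - x) * (y + t) = y := by
      field_simp; ring
    rw [e1] at h1
    rw [e2] at h2
    have hs1 : (y - x) / (y + t - x) * g x + t / (y + t - x) * g x = g x := by
      linear_combination (g x) * hαβ
    have hs2 : (y - x) / (y + t - x) * g (y + t) + t / (y + t - x) * g (y + t) = g (y + t) := by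
      linear_combination (g (y + t)) * hαβ
    linarith [h1, h2, hs1, hs2]

/-- Multi-component monotonicity for `φ_m`: if `a_k ≥ b_k ≥ 36πm²` and
`γ ≥ 0`, then `φ_m(γ + Σ a_k) − Σ φ_m(a_k) ≥ φ_m(γ + Σ b_k) − Σ φ_m(b_k)`. -/
theorem schwPhi_multi_monotonicity (m : ℝ) (hm : 0 < m) (n : ℕ) (hn : 0 < n)
    (a b : Fin n → ℝ) (hb : ∀ k, 36 * Real.pi * m ^ 2 ≤ b k) (hab : ∀ k, b k ≤ a k)
    (γ : ℝ) (hγ : 0 ≤ γ) :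
    schwPhi m (γ + ∑ k, b k) - ∑ k, schwPhi m (b k)
      ≤ schwPhi m (γ + ∑ k, a k) - ∑ k, schwPhi m (a k) := by
  classical
  have hpi := Real.pi_pos
  have hcpos : 0 < 36 * Real.pi * m ^ 2 := by positivity
  have ha : ∀ k, 36 * Real.pi * m ^ 2 ≤ a k := fun k => (hb k).trans (hab k)
  have hbnn : ∀ k, 0 ≤ b k := fun k => hcpos.le.trans (hb k)
  have hann : ∀ k, 0 ≤ a k := fun k => hcpos.le.trans (ha k)
  have hsumb : 36 * Real.pi * m ^ 2 ≤ ∑ k, b k :=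
    le_trans (hb ⟨0, hn⟩) (Finset.single_le_sum (fun k _ => hbnn k) (Finset.mem_univ (⟨0, hn⟩ : Fin n)))
  have hsuma : 36 * Real.pi * m ^ 2 ≤ ∑ k, a k :=
    le_trans (ha ⟨0, hn⟩) (Finset.single_le_sum (fun k _ => hann k) (Finset.mem_univ (⟨0, hn⟩ : Fin n)))
  have hrw : ∀ X : ℝ, 36 * Real.pi * m ^ 2 ≤ X → schwPhi m X = gg m X := by
    intro X hX
    exact (schwPhi_eq hm (by nlinarith)).trans rfl
  rw [hrw _ (by linarith), hrw _ (by linarith),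
    Finset.sum_congr rfl (fun k _ => hrw _ (hb k)),
    Finset.sum_congr rfl (fun k _ => hrw _ (ha k))]
  -- interpolation path
  set C : ℕ → ℝ := fun j => γ + ∑ k : Fin n, (if (k : ℕ) < j then a k else b k) with hCdef
  have hC0 : C 0 = γ + ∑ k, b k := by simp [hCdef]
  have hCn : C n = γ + ∑ k, a k := by
    simp only [hCdef]
    congr 1
    exact Finset.sum_congr rfl fun k _ => by simp [k.isLt]
  have hstep : ∀ j : ℕ, ∀ hj : j < n, C (j + 1) = C j + (a ⟨j, hj⟩ - b ⟨j, hj⟩) := by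
    intro j hj
    have hterm : ∀ k : Fin n, (if (k : ℕ) < j + 1 then a k else b k)
        = (if (k : ℕ) < j then a k else b k)
          + (if k = ⟨j, hj⟩ then a ⟨j, hj⟩ - b ⟨j, hj⟩ else 0) := by
      intro k
      by_cases hkj : k = ⟨j, hj⟩
      · subst hkj
        rw [if_pos (by simp : ((⟨j, hj⟩ : Fin n) : ℕ) < j + 1),
          if_neg (by simp : ¬((⟨j, hj⟩ : Fin n) : ℕ) < j), if_pos rfl]
        ring
      · have hne : (k : ℕ) ≠ j := fun h => hkj (Fin.ext h)
        rw [if_neg hkj, add_zero]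
        by_cases h : (k : ℕ) < j
        · rw [if_pos (by omega), if_pos h]
        · rw [if_neg (by omega), if_neg h]
    simp only [hCdef]
    rw [Finset.sum_congr rfl (fun k _ => hterm k), Finset.sum_add_distrib,
      Finset.sum_ite_eq' Finset.univ (⟨j, hj⟩ : Fin n)
        (fun _ => a ⟨j, hj⟩ - b ⟨j, hj⟩)]
    simp
    ring
  have hCb : ∀ j : ℕ, ∀ hj : j < n, b ⟨j, hj⟩ ≤ C j := by
    intro j hj
    have h1 := Finset.single_le_sum
      (f := fun k : Fin n => if (k : ℕ) < j then a k else b k)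
      (fun k _ => by
        show 0 ≤ if (k : ℕ) < j then a k else b k
        split_ifs
        exacts [hann k, hbnn k]) (Finset.mem_univ ⟨j, hj⟩)
    simp only at h1
    rw [if_neg (by simp : ¬((⟨j, hj⟩ : Fin n) : ℕ) < j)] at h1
    simp only [hCdef]
    linarith
  have hkey : ∀ j : ℕ, ∀ hj : j < n,
      gg m (a ⟨j, hj⟩) - gg m (b ⟨j, hj⟩) ≤ gg m (C (j + 1)) - gg m (C j) := by
    intro j hj
    have h := convex_two_point (convexOn_g hm) (hb ⟨j, hj⟩) (hCb j hj)
      (by linarith [hab ⟨j, hj⟩] : (0:ℝ) ≤ a ⟨j, hj⟩ - b ⟨j, hj⟩)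
    rw [show b ⟨j, hj⟩ + (a ⟨j, hj⟩ - b ⟨j, hj⟩) = a ⟨j, hj⟩ by ring, ← hstep j hj] at h
    exact h
  set a' : ℕ → ℝ := fun j => if h : j < n then gg m (a ⟨j, h⟩) - gg m (b ⟨j, h⟩) else 0
    with ha'def
  have hsum : ∑ j ∈ Finset.range n, a' j ≤ gg m (C n) - gg m (C 0) := by
    rw [← Finset.sum_range_sub (fun j => gg m (C j)) n]
    apply Finset.sum_le_sum
    intro j hj
    rw [Finset.mem_range] at hj
    simp only [ha'def, dif_pos hj]
    exact hkey j hj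
  have hconv_sum : ∑ j ∈ Finset.range n, a' j
      = (∑ k, gg m (a k)) - (∑ k, gg m (b k)) := by
    rw [← Fin.sum_univ_eq_sum_range a' n, ← Finset.sum_sub_distrib]
    exact Finset.sum_congr rfl fun k _ => by simp [ha'def, k.isLt]
  rw [hC0, hCn] at hsum
  linarith [hsum, hconv_sum]
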